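/- For all real numbers a and b, the function P ↦ ( logb 2 (1 + P^a / 2) + logb 2 (1 + P^b / 2) − 2 ) / logb 2 P tends to max(a, 0) + max(b, 0) as P → ∞ (limit along the real numbers tending to +∞), where P^a denotes the real power and logb 2 is the base-2 logarithm. -/

import Mathlib

open Filter Real

lemma aux16 (c : ℝ) :
    Tendsto (fun P : ℝ => Real.log (1 + P ^ c / 2) / Real.log P)
      Filter.atTop (nhds (max c 0)) := by
  rcases lt_trichotomy c 0 with hc | rfl | hc
  · rw [max_eq_right hc.le]
    have h0 : Tendsto (fun P : ℝ => P ^ c) atTop (nhds 0) := by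
      have := tendsto_rpow_neg_atTop (y := -c) (by linarith)
      simpa using this
    have h1 : Tendsto (fun P : ℝ => 1 + P ^ c / 2) atTop (nhds (1 + 0 / 2)) :=
      tendsto_const_nhds.add (h0.div_const 2)
    have h2 : Tendsto (fun P : ℝ => Real.log (1 + P ^ c / 2)) atTop (nhds (Real.log 1)) := by
      have := (Real.continuousAt_log (x := 1 + 0 / 2) (by norm_num)).tendsto.comp h1
      simpa [Function.comp_def] using this
    have := h2.div_atTop Real.tendsto_log_atTop
    simpa using this
  · simp only [Real.rpow_zero]
    have := (tendsto_const_nhds (x := Real.log (1 + 1 / 2)) (f := atTop (α := ℝ))).div_atTop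
      Real.tendsto_log_atTop
    simpa using this
  · rw [max_eq_left hc.le]
    have key : ∀ᶠ P in atTop, c + Real.log (P ^ (-c) + 1 / 2) / Real.log P
        = Real.log (1 + P ^ c / 2) / Real.log P := by
      filter_upwards [eventually_gt_atTop 1] with P hP
      have hP0 : (0 : ℝ) < P := lt_trans one_pos hP
      have hlog : 0 < Real.log P := Real.log_pos hP
      have heq : 1 + P ^ c / 2 = P ^ c * (P ^ (-c) + 1 / 2) := by
        rw [mul_add, ← Real.rpow_add hP0, add_neg_cancel, Real.rpow_zero]
        ring
      rw [heq, Real.log_mul (by positivity) (by positivity), Real.log_rpow hP0]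
      field_simp
    have h0 : Tendsto (fun P : ℝ => P ^ (-c) + 1 / 2) atTop (nhds (0 + 1 / 2)) :=
      (tendsto_rpow_neg_atTop hc).add tendsto_const_nhds
    have h1 : Tendsto (fun P : ℝ => Real.log (P ^ (-c) + 1 / 2)) atTop
        (nhds (Real.log (0 + 1/2))) :=
      (Real.continuousAt_log (by norm_num)).tendsto.comp h0
    have h2 : Tendsto (fun P : ℝ => c + Real.log (P ^ (-c) + 1 / 2) / Real.log P) atTop
        (nhds (c + 0)) :=
      tendsto_const_nhds.add (h1.div_atTop Real.tendsto_log_atTop)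
    have := Tendsto.congr' key h2
    simpa using this

theorem stmt16 (a b : ℝ) :
    Filter.Tendsto
      (fun P : ℝ =>
        (Real.logb 2 (1 + P ^ a / 2) + Real.logb 2 (1 + P ^ b / 2) - 2) / Real.logb 2 P)
      Filter.atTop (nhds (max a 0 + max b 0)) := by
  have key : ∀ᶠ P in atTop,
      Real.log (1 + P ^ a / 2) / Real.log P + Real.log (1 + P ^ b / 2) / Real.log P
        - 2 * Real.log 2 / Real.log P
      = (Real.logb 2 (1 + P ^ a / 2) + Real.logb 2 (1 + P ^ b / 2) - 2) / Real.logb 2 P := by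
    filter_upwards [eventually_gt_atTop 1] with P hP
    have hlP : Real.log P ≠ 0 := ne_of_gt (Real.log_pos hP)
    have h2 : Real.log 2 ≠ 0 := ne_of_gt (Real.log_pos (by norm_num))
    simp only [Real.logb]
    field_simp
  have h0 : Tendsto (fun P : ℝ => 2 * Real.log 2 / Real.log P) atTop (nhds 0) :=
    tendsto_const_nhds.div_atTop Real.tendsto_log_atTop
  have h := ((aux16 a).add (aux16 b)).sub h0
  have := Tendsto.congr' key h
  simpa using this
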